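/- Let G be a graph and X a set of k vertices such that X separates G into parts A and B (every path from A to B passes through X). Then for any s ∈ A and t ∈ B, t is reachable from s in G if and only if there exist r ≤ k and vertices v₁,…,v_r ∈ X with v₀ = s, v_{r+1} = t such that for each even index x, v_{x+1} is reachable from v_x in the subgraph induced by A ∪ X, and for each odd index x, v_{x+1} is reachable from v_x in the subgraph induced by B ∪ X (or the symmetric alternation). -/

import Mathlib

/-- Reachability in the directed graph with edge set `E`, using only vertices
of `W`. -/
def DReach (E : Finset (ℕ × ℕ)) (W : Finset ℕ) (a b : ℕ) : Prop :=
  Relation.ReflTransGen (fun x y => x ∈ W ∧ y ∈ W ∧ (x, y) ∈ E) a b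

namespace SepAux

open List

/-- The vertex set of the currently allowed side: `true` = `A ∪ X`. -/
def sideSet (A B X : Finset ℕ) : Bool → Finset ℕ := fun b => if b then A ∪ X else B ∪ X

/-- Alternating legs from `a` through the list `xs` ending at `t`. -/
def Legs (E : Finset (ℕ × ℕ)) (A B X : Finset ℕ) : Bool → ℕ → List ℕ → ℕ → Prop
  | si, a, [], t => DReach E (sideSet A B X si) a t
  | si, a, x :: xs, t => DReach E (sideSet A B X si) a x ∧ Legs E A B X (!si) x xs t

variable {E : Finset (ℕ × ℕ)} {A B X : Finset ℕ}

lemma legs_head {si : Bool} {a b t : ℕ} {xs : List ℕ}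
    (ha : a ∈ sideSet A B X si) (hb : b ∈ sideSet A B X si) (he : (a, b) ∈ E)
    (hl : Legs E A B X si b xs t) : Legs E A B X si a xs t := by
  cases xs with
  | nil => exact Relation.ReflTransGen.head ⟨ha, hb, he⟩ hl
  | cons y ys => exact ⟨Relation.ReflTransGen.head ⟨ha, hb, he⟩ hl.1, hl.2⟩

/-- Any chain can be replaced by a duplicate-free chain with the same endpoints. -/
lemma chain_nodup {α : Type*} {r : α → α → Prop} :
    ∀ (n : ℕ) (l : List α), l.length ≤ n → ∀ a, List.Chain r a l →
      ∃ l', l' ⊆ l ∧ List.Chain r a l' ∧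
        (a :: l').getLast (List.cons_ne_nil _ _) = (a :: l).getLast (List.cons_ne_nil _ _) ∧
        (a :: l').Nodup := by
  intro n
  induction n with
  | zero =>
    intro l hl a _
    have : l = [] := List.length_eq_zero_iff.mp (Nat.le_zero.mp hl)
    subst this
    exact ⟨[], by simp, List.Chain.nil, rfl, by simp⟩
  | succ n ih =>
    intro l hl a hc
    by_cases hmem : a ∈ l
    · obtain ⟨l₁, l₂, rfl⟩ := List.append_of_mem hmem
      have hc2 : List.Chain r a l₂ := (List.isChain_cons_split.mp hc).2
      have hlen : l₂.length ≤ n := by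
        have := hl; simp [List.length_append] at this; omega
      obtain ⟨l', hsub, hch, hlast, hnd⟩ := ih l₂ hlen a hc2
      refine ⟨l', fun x hx => ?_, hch, ?_, hnd⟩
      · exact List.mem_append.mpr (Or.inr (List.mem_cons_of_mem _ (hsub hx)))
      · rw [hlast]
        have hne : l₁ ++ a :: l₂ ≠ [] := by simp
        rw [List.getLast_cons hne,
          List.getLast_append_of_ne_nil _ (List.cons_ne_nil _ _)]
    · cases l with
      | nil => exact ⟨[], by simp, List.Chain.nil, rfl, by simp⟩
      | cons b l₂ =>
        replace hc := List.chain_cons.mp hc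
        have hlen : l₂.length ≤ n := by simp at hl; omega
        obtain ⟨l', hsub, hch, hlast, hnd⟩ := ih l₂ hlen b hc.2
        refine ⟨b :: l', ?_, List.Chain.cons hc.1 hch, ?_, ?_⟩
        · exact List.cons_subset.mpr ⟨List.mem_cons_self,
            fun x hx => List.mem_cons_of_mem _ (hsub hx)⟩
        · rw [List.getLast_cons_cons, List.getLast_cons_cons, hlast]
        · refine List.nodup_cons.mpr ⟨?_, hnd⟩
          intro hin
          rcases List.mem_cons.mp hin with h | h
          · exact hmem (h ▸ List.mem_cons_self)
          · exact hmem (List.mem_cons_of_mem _ (hsub h))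

lemma mem_sideSet_of_mem_X {x : ℕ} (hx : x ∈ X) (si : Bool) : x ∈ sideSet A B X si := by
  cases si <;> simp [sideSet, hx]

/-- Core: a chain inside `A ∪ B ∪ X` ending at `t ∈ B` yields alternating legs
through a sub-list of its vertices, all in `X`. -/
lemma core (hAB : Disjoint A B) (hAX : Disjoint A X) (hBX : Disjoint B X)
    (hE : ∀ e ∈ E, (e.1 ∈ A ∪ X ∧ e.2 ∈ A ∪ X) ∨ (e.1 ∈ B ∪ X ∧ e.2 ∈ B ∪ X))
    {t : ℕ} (ht : t ∈ B) :
    ∀ (l : List ℕ) (u : ℕ) (si : Bool), u ∈ sideSet A B X si →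
      List.Chain (fun x y => x ∈ A ∪ B ∪ X ∧ y ∈ A ∪ B ∪ X ∧ (x, y) ∈ E) u l →
      (u :: l).getLast (List.cons_ne_nil _ _) = t →
      ∃ xs : List ℕ, xs.Sublist (u :: l) ∧ (∀ x ∈ xs, x ∈ X) ∧ Legs E A B X si u xs t := by
  intro l
  induction l with
  | nil =>
    intro u si hu _ hlast
    simp at hlast
    subst hlast
    cases si with
    | false =>
      exact ⟨[], List.nil_sublist _, by simp, Relation.ReflTransGen.refl⟩
    | true =>
      exfalso
      simp [sideSet] at hu
      rcases hu with h | h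
      · exact (Finset.disjoint_left.mp hAB) h ht
      · exact (Finset.disjoint_left.mp hBX) ht h
  | cons w l' ih =>
    intro u si hu hc hlast
    replace hc := List.chain_cons.mp hc
    obtain ⟨⟨huW, hwW, he⟩, hc'⟩ := hc
    rw [List.getLast_cons_cons] at hlast
    by_cases hw : w ∈ sideSet A B X si
    · obtain ⟨xs, hsub, hxsX, hlegs⟩ := ih w si hw hc' hlast
      exact ⟨xs, hsub.cons _, hxsX, legs_head hu hw he hlegs⟩
    · have key : u ∈ X ∧ w ∈ sideSet A B X (!si) := by
        rcases hE (u, w) he with ⟨h1, h2⟩ | ⟨h1, h2⟩ <;> cases si <;>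
          simp [sideSet] at hu hw ⊢ <;>
          simp [Finset.mem_union] at h1 h2 <;>
          [skip; skip; skip; skip] <;>
          first
          | (constructor
             · rcases hu with hu | hu
               · rcases h1 with h1 | h1
                 · exact absurd h1 (fun h => (Finset.disjoint_left.mp hAB) h hu)
                 · exact absurd h1 (fun h => (Finset.disjoint_left.mp hBX) hu h)
               · exact hu
             · tauto)
          | (constructor
             · rcases hu with hu | hu
               · rcases h1 with h1 | h1
                 · exact absurd h1 (fun h => (Finset.disjoint_left.mp hAB) hu h)
                 · exact absurd h1 (fun h => (Finset.disjoint_left.mp hAX) hu h)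
               · exact hu
             · tauto)
          | tauto
      obtain ⟨hux, hwside⟩ := key
      obtain ⟨xs', hsub', hxsX', hlegs'⟩ := ih w (!si) hwside hc' hlast
      have hlegs2 : Legs E A B X (!si) u xs' t :=
        legs_head (mem_sideSet_of_mem_X hux _) hwside he hlegs'
      refine ⟨u :: xs', List.Sublist.cons₂ _ hsub', ?_, ?_⟩
      · intro x hx
        rcases List.mem_cons.mp hx with rfl | h
        · exact hux
        · exact hxsX' x h
      · exact ⟨Relation.ReflTransGen.refl, hlegs2⟩

lemma legs_getD {t : ℕ} :
    ∀ (xs : List ℕ) (si : Bool) (a : ℕ), Legs E A B X si a xs t →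
      ∀ x ≤ xs.length,
        DReach E (sideSet A B X (if Even x then si else !si))
          ((a :: xs).getD x t) ((a :: xs).getD (x + 1) t) := by
  intro xs
  induction xs with
  | nil =>
    intro si a hl x hx
    have hx0 : x = 0 := by simpa using hx
    subst hx0
    simpa [Legs] using hl
  | cons y ys ih =>
    intro si a hl x hx
    cases x with
    | zero => simpa using hl.1
    | succ j =>
      have hj : j ≤ ys.length := by simpa using hx
      have := ih (!si) y hl.2 j hj
      have hside : (if Even (j + 1) then si else !si) = (if Even j then !si else !(!si)) := by
        by_cases h : Even j <;> simp [Nat.even_add_one, h]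
      rw [hside]
      simpa [List.getD_cons_succ] using this

end SepAux

open SepAux in
/-- If `X` (of size `k`) separates the directed graph into parts `A` and `B`
(every edge lies within `A ∪ X` or within `B ∪ X`), then for `s ∈ A`, `t ∈ B`,
`t` is reachable from `s` iff there are `r ≤ k` intermediate vertices
`v₁, …, v_r ∈ X` (with `v₀ = s`, `v_{r+1} = t`) such that the consecutive legs
are alternately realized inside `A ∪ X` and inside `B ∪ X` (or the symmetric
alternation). -/
theorem separator_reachability (k : ℕ) (A B X : Finset ℕ) (E : Finset (ℕ × ℕ))
    (hX : X.card = k)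
    (hAB : Disjoint A B) (hAX : Disjoint A X) (hBX : Disjoint B X)
    (hE : ∀ e ∈ E, (e.1 ∈ A ∪ X ∧ e.2 ∈ A ∪ X) ∨ (e.1 ∈ B ∪ X ∧ e.2 ∈ B ∪ X))
    (s t : ℕ) (hs : s ∈ A) (ht : t ∈ B) :
    DReach E (A ∪ B ∪ X) s t ↔
      ∃ r ≤ k, ∃ v : ℕ → ℕ, v 0 = s ∧ v (r + 1) = t ∧
        (∀ x : ℕ, 1 ≤ x → x ≤ r → v x ∈ X) ∧
        ((∀ x ≤ r, (Even x → DReach E (A ∪ X) (v x) (v (x + 1))) ∧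
            (¬ Even x → DReach E (B ∪ X) (v x) (v (x + 1)))) ∨
         (∀ x ≤ r, (Even x → DReach E (B ∪ X) (v x) (v (x + 1))) ∧
            (¬ Even x → DReach E (A ∪ X) (v x) (v (x + 1))))) := by
  constructor
  · intro h
    obtain ⟨l, hch, hlast⟩ := List.exists_isChain_cons_of_relationReflTransGen h
    obtain ⟨l', hsub, hch', hlast', hnd⟩ := chain_nodup l.length l le_rfl s hch
    rw [hlast] at hlast'
    have hsA : s ∈ sideSet A B X true := by simp [sideSet, hs]
    obtain ⟨xs, hxsub, hxsX, hlegs⟩ :=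
      core hAB hAX hBX hE ht l' s true hsA hch' hlast'
    have hxnd : xs.Nodup := hnd.sublist hxsub
    refine ⟨xs.length, ?_, fun i => (s :: xs).getD i t, by simp, ?_, ?_, Or.inl ?_⟩
    · calc xs.length = xs.toFinset.card := (List.toFinset_card_of_nodup hxnd).symm
        _ ≤ X.card := Finset.card_le_card (fun x hx => hxsX x (List.mem_toFinset.mp hx))
        _ = k := hX
    · exact List.getD_eq_default _ _ (by simp)
    · intro x h1 hr
      obtain ⟨j, rfl⟩ : ∃ j, x = j + 1 := ⟨x - 1, by omega⟩
      show (s :: xs).getD (j + 1) t ∈ X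
      rw [List.getD_cons_succ]
      have hj : j < xs.length := by omega
      rw [List.getD_eq_getElem _ _ hj]
      exact hxsX _ (List.getElem_mem _)
    · intro x hx
      have := legs_getD xs true s hlegs x hx
      constructor
      · intro hev; rw [if_pos hev] at this; simpa [sideSet] using this
      · intro hev; rw [if_neg hev] at this; simpa [sideSet] using this
  · rintro ⟨r, hr, v, hv0, hvr, hvX, hleg⟩
    have monoA : DReach E (A ∪ X) ≤ DReach E (A ∪ B ∪ X) := by
      intro a b h
      refine Relation.ReflTransGen.mono ?_ _ _ h
      rintro x y ⟨h1, h2, h3⟩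
      simp only [Finset.mem_union] at h1 h2 ⊢
      tauto
    have monoB : DReach E (B ∪ X) ≤ DReach E (A ∪ B ∪ X) := by
      intro a b h
      refine Relation.ReflTransGen.mono ?_ _ _ h
      rintro x y ⟨h1, h2, h3⟩
      simp only [Finset.mem_union] at h1 h2 ⊢
      tauto
    have hstep : ∀ x ≤ r, DReach E (A ∪ B ∪ X) (v x) (v (x + 1)) := by
      intro x hx
      rcases hleg with h | h <;> obtain ⟨h1, h2⟩ := h x hx <;> by_cases hev : Even x
      · exact monoA _ _ (h1 hev)
      · exact monoB _ _ (h2 hev)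
      · exact monoB _ _ (h1 hev)
      · exact monoA _ _ (h2 hev)
    have key : ∀ i ≤ r + 1, DReach E (A ∪ B ∪ X) s (v i) := by
      intro i
      induction i with
      | zero => intro _; rw [hv0]; exact Relation.ReflTransGen.refl
      | succ j ihj =>
        intro hj
        exact Relation.ReflTransGen.trans (ihj (by omega)) (hstep j (by omega))
    have := key (r + 1) le_rfl
    rwa [hvr] at this
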